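/- (Fixed-horizon policy as a special case with zero terminal value.) In a finite discounted MDP, let M̂ be an approximate transition model with D_TV(p(·|s,a), M̂(·|s,a)) ≤ ε_m for all (s,a) ∈ S×A and let 0 ≤ r(s,a) ≤ Rmax for all (s,a). Fix a horizon H ≥ 1, take V̂ ≡ 0, and let W : S → ℝ be the value of the H-step lookahead policy π_{H,0} (the fixed-horizon planning policy with no terminal value function, for any choice of maximizers π^s). Then for every state s0, V*(s0) − W(s0) ≤ (2/(1−γ^H))·[Rmax·Σ_{t=0}^{H−1} γ^t·t·ε_m + γ^H·sup_{s∈S} V*(s)]. -/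

import Mathlib

/-- State distribution at time `t` of a (possibly non-stationary) deterministic policy `π`
started from `s0`, under transition model `N`. -/
noncomputable def stateDist {S A : Type*} [Fintype S] [DecidableEq S]
    (N : S → A → S → ℝ) (π : ℕ → S → A) (s0 : S) : ℕ → S → ℝ
  | 0 => fun s => if s = s0 then 1 else 0
  | t + 1 => fun s' => ∑ s : S, stateDist N π s0 t s * N s (π t s) s'

/-- Discounted value of a (possibly non-stationary) deterministic policy. -/
noncomputable def value {S A : Type*} [Fintype S] [DecidableEq S]
    (p : S → A → S → ℝ) (r : S → A → ℝ) (γ : ℝ) (π : ℕ → S → A) (s0 : S) : ℝ :=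
  ∑' t : ℕ, γ ^ t * ∑ s : S, stateDist p π s0 t s * r s (π t s)

/-- Optimal value function: supremum of values over all deterministic policies. -/
noncomputable def vStar {S A : Type*} [Fintype S] [DecidableEq S]
    (p : S → A → S → ℝ) (r : S → A → ℝ) (γ : ℝ) (s0 : S) : ℝ :=
  ⨆ π : ℕ → S → A, value p r γ π s0

/-- H-step lookahead objective of an H-step policy `π` (only its first `H` maps are used),
under transition model `N`, with terminal value function `Vhat`. -/
noncomputable def lookahead {S A : Type*} [Fintype S] [DecidableEq S]
    (N : S → A → S → ℝ) (r : S → A → ℝ) (γ : ℝ) (Vhat : S → ℝ) (H : ℕ)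
    (π : ℕ → S → A) (s : S) : ℝ :=
  (∑ t ∈ Finset.range H, γ ^ t * ∑ s' : S, stateDist N π s t s' * r s' (π t s')) +
    γ ^ H * ∑ s' : S, stateDist N π s H s' * Vhat s'

section AuxLemmas

set_option linter.unusedSectionVars false

variable {S A : Type*} [Fintype S] [DecidableEq S]

lemma stateDist_nonneg (N : S → A → S → ℝ) (hN : ∀ s a s', 0 ≤ N s a s')
    (π : ℕ → S → A) (s0 : S) : ∀ t s, 0 ≤ stateDist N π s0 t s := by
  intro t
  induction t with
  | zero => intro s; simp only [stateDist]; split <;> norm_num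
  | succ t ih =>
    intro s
    exact Finset.sum_nonneg fun s' _ => mul_nonneg (ih s') (hN _ _ _)

lemma stateDist_sum (N : S → A → S → ℝ) (hN : ∀ s a, ∑ s' : S, N s a s' = 1)
    (π : ℕ → S → A) (s0 : S) : ∀ t, ∑ s : S, stateDist N π s0 t s = 1 := by
  intro t
  induction t with
  | zero => simp [stateDist]
  | succ t ih =>
    show ∑ s' : S, ∑ s : S, stateDist N π s0 t s * N s (π t s) s' = 1
    rw [Finset.sum_comm]
    simp only [← Finset.mul_sum, hN, mul_one, ih]

lemma stateDist_add (N : S → A → S → ℝ) (π : ℕ → S → A) (s0 : S) (H : ℕ) :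
    ∀ k s'', stateDist N π s0 (H + k) s'' =
      ∑ s' : S, stateDist N π s0 H s' * stateDist N (fun t => π (H + t)) s' k s'' := by
  intro k
  induction k with
  | zero => intro s''; simp [stateDist]
  | succ k ih =>
    intro s''
    show ∑ s : S, stateDist N π s0 (H + k) s * N s (π (H + k) s) s'' = _
    have : ∀ s', stateDist N (fun t => π (H + t)) s' (k + 1) s'' =
        ∑ s : S, stateDist N (fun t => π (H + t)) s' k s * N s (π (H + k) s) s'' := by
      intro s'; rfl
    simp only [this, ih, Finset.sum_mul, Finset.mul_sum]
    rw [Finset.sum_comm]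
    exact Finset.sum_congr rfl fun s _ => Finset.sum_congr rfl fun s' _ => by ring

variable {p Mhat : S → A → S → ℝ} {r : S → A → ℝ} {γ Rmax εm : ℝ}
variable (hp_nonneg : ∀ s a s', 0 ≤ p s a s') (hp_sum : ∀ s a, ∑ s' : S, p s a s' = 1)
variable (hM_nonneg : ∀ s a s', 0 ≤ Mhat s a s') (hM_sum : ∀ s a, ∑ s' : S, Mhat s a s' = 1)
variable (hγ0 : 0 < γ) (hγ1 : γ < 1)
variable (hTV : ∀ s a, (1 / 2) * ∑ s' : S, |p s a s' - Mhat s a s'| ≤ εm)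
variable (hr0 : ∀ s a, 0 ≤ r s a) (hrmax : ∀ s a, r s a ≤ Rmax)

section
include hp_nonneg hp_sum hγ0 hγ1 hr0 hrmax

lemma reward_term_bounds (π : ℕ → S → A) (s0 : S) (t : ℕ) :
    0 ≤ γ ^ t * ∑ s : S, stateDist p π s0 t s * r s (π t s) ∧
    γ ^ t * ∑ s : S, stateDist p π s0 t s * r s (π t s) ≤ γ ^ t * Rmax := by
  have hd := stateDist_nonneg p hp_nonneg π s0 t
  constructor
  · exact mul_nonneg (pow_nonneg hγ0.le t)
      (Finset.sum_nonneg fun s _ => mul_nonneg (hd s) (hr0 _ _))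
  · apply mul_le_mul_of_nonneg_left _ (pow_nonneg hγ0.le t)
    calc ∑ s : S, stateDist p π s0 t s * r s (π t s)
        ≤ ∑ s : S, stateDist p π s0 t s * Rmax :=
          Finset.sum_le_sum fun s _ => mul_le_mul_of_nonneg_left (hrmax _ _) (hd s)
      _ = Rmax := by rw [← Finset.sum_mul, stateDist_sum p hp_sum, one_mul]

lemma value_summable (π : ℕ → S → A) (s0 : S) :
    Summable (fun t : ℕ => γ ^ t * ∑ s : S, stateDist p π s0 t s * r s (π t s)) := by
  apply Summable.of_nonneg_of_le
    (fun t => (reward_term_bounds hp_nonneg hp_sum hγ0 hγ1 hr0 hrmax π s0 t).1)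
    (fun t => (reward_term_bounds hp_nonneg hp_sum hγ0 hγ1 hr0 hrmax π s0 t).2)
  exact (summable_geometric_of_lt_one hγ0.le hγ1).mul_right Rmax

lemma value_nonneg (π : ℕ → S → A) (s0 : S) : 0 ≤ value p r γ π s0 :=
  tsum_nonneg fun t => (reward_term_bounds hp_nonneg hp_sum hγ0 hγ1 hr0 hrmax π s0 t).1

lemma value_le (π : ℕ → S → A) (s0 : S) : value p r γ π s0 ≤ (1 - γ)⁻¹ * Rmax := by
  have := Summable.tsum_le_tsum
    (fun t => (reward_term_bounds hp_nonneg hp_sum hγ0 hγ1 hr0 hrmax π s0 t).2)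
    (value_summable hp_nonneg hp_sum hγ0 hγ1 hr0 hrmax π s0)
    ((summable_geometric_of_lt_one hγ0.le hγ1).mul_right Rmax)
  calc value p r γ π s0 ≤ ∑' t : ℕ, γ ^ t * Rmax := this
    _ = (1 - γ)⁻¹ * Rmax := by
        rw [tsum_mul_right, tsum_geometric_of_lt_one hγ0.le hγ1]

lemma value_bddAbove (s0 : S) : BddAbove (Set.range fun π : ℕ → S → A => value p r γ π s0) := by
  refine ⟨(1 - γ)⁻¹ * Rmax, ?_⟩
  rintro x ⟨π, rfl⟩
  exact value_le hp_nonneg hp_sum hγ0 hγ1 hr0 hrmax π s0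

lemma vStar_nonneg [Nonempty A] (s0 : S) : 0 ≤ vStar p r γ s0 := by
  inhabit A
  refine le_trans (value_nonneg hp_nonneg hp_sum hγ0 hγ1 hr0 hrmax (fun _ _ => default) s0) ?_
  exact le_ciSup (value_bddAbove hp_nonneg hp_sum hγ0 hγ1 hr0 hrmax s0) _

lemma value_split (π : ℕ → S → A) (s0 : S) (H : ℕ) :
    value p r γ π s0 =
      (∑ t ∈ Finset.range H, γ ^ t * ∑ s : S, stateDist p π s0 t s * r s (π t s)) +
        γ ^ H * ∑ s' : S, stateDist p π s0 H s' * value p r γ (fun t => π (H + t)) s' := by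
  have hsum := value_summable hp_nonneg hp_sum hγ0 hγ1 hr0 hrmax π s0
  rw [value, ← Summable.sum_add_tsum_nat_add H hsum]
  congr 1
  have hpt : ∀ t : ℕ, γ ^ (t + H) * ∑ s : S, stateDist p π s0 (t + H) s * r s (π (t + H) s)
      = ∑ s' : S, stateDist p π s0 H s' *
          (γ ^ H * (γ ^ t * ∑ s'' : S,
            stateDist p (fun u => π (H + u)) s' t s'' * r s'' (π (H + t) s''))) := by
    intro t
    have h1 : t + H = H + t := Nat.add_comm t H
    rw [h1]
    simp only [stateDist_add p π s0 H t, Finset.sum_mul, Finset.mul_sum]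
    rw [Finset.sum_comm]
    refine Finset.sum_congr rfl fun s' _ => Finset.sum_congr rfl fun s'' _ => by ring
  calc ∑' t : ℕ, γ ^ (t + H) * ∑ s : S, stateDist p π s0 (t + H) s * r s (π (t + H) s)
      = ∑' t : ℕ, ∑ s' : S, stateDist p π s0 H s' *
          (γ ^ H * (γ ^ t * ∑ s'' : S,
            stateDist p (fun u => π (H + u)) s' t s'' * r s'' (π (H + t) s''))) :=
        tsum_congr hpt
    _ = ∑ s' : S, ∑' t : ℕ, stateDist p π s0 H s' *
          (γ ^ H * (γ ^ t * ∑ s'' : S,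
            stateDist p (fun u => π (H + u)) s' t s'' * r s'' (π (H + t) s''))) := by
        apply Summable.tsum_finsetSum
        intro s' _
        exact ((value_summable hp_nonneg hp_sum hγ0 hγ1 hr0 hrmax
          (fun u => π (H + u)) s').mul_left _).mul_left _
    _ = γ ^ H * ∑ s' : S, stateDist p π s0 H s' * value p r γ (fun t => π (H + t)) s' := by
        rw [Finset.mul_sum]
        refine Finset.sum_congr rfl fun s' _ => ?_
        rw [tsum_mul_left, tsum_mul_left, value]
        ring

end

section
include hp_nonneg hp_sum hM_nonneg hM_sum hγ0 hγ1 hTV hr0 hrmax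

lemma dist_TV (π : ℕ → S → A) (s0 : S) :
    ∀ t, ∑ s' : S, |stateDist p π s0 t s' - stateDist Mhat π s0 t s'| ≤ 2 * t * εm := by
  intro t
  induction t with
  | zero => simp [stateDist]
  | succ t ih =>
    have hkey : ∀ s'' : S,
        |stateDist p π s0 (t+1) s'' - stateDist Mhat π s0 (t+1) s''| ≤
          ∑ s : S, (|stateDist p π s0 t s - stateDist Mhat π s0 t s| * p s (π t s) s''
            + stateDist Mhat π s0 t s * |p s (π t s) s'' - Mhat s (π t s) s''|) := by
      intro s''
      have h1 : stateDist p π s0 (t+1) s'' - stateDist Mhat π s0 (t+1) s''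
          = ∑ s : S, ((stateDist p π s0 t s - stateDist Mhat π s0 t s) * p s (π t s) s''
            + stateDist Mhat π s0 t s * (p s (π t s) s'' - Mhat s (π t s) s'')) := by
        show (∑ s : S, stateDist p π s0 t s * p s (π t s) s'')
            - (∑ s : S, stateDist Mhat π s0 t s * Mhat s (π t s) s'') = _
        rw [← Finset.sum_sub_distrib]
        exact Finset.sum_congr rfl fun s _ => by ring
      rw [h1]
      refine (Finset.abs_sum_le_sum_abs _ _).trans (Finset.sum_le_sum fun s _ => ?_)
      refine (abs_add_le _ _).trans ?_
      gcongr
      · rw [abs_mul, abs_of_nonneg (hp_nonneg _ _ _)]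
      · rw [abs_mul, abs_of_nonneg (stateDist_nonneg Mhat hM_nonneg π s0 t s)]
    have hεm : 0 ≤ εm := by
      have := hTV s0 (π 0 s0)
      have h0 : 0 ≤ (1/2 : ℝ) * ∑ s' : S, |p s0 (π 0 s0) s' - Mhat s0 (π 0 s0) s'| := by
        positivity
      linarith
    calc ∑ s'' : S, |stateDist p π s0 (t+1) s'' - stateDist Mhat π s0 (t+1) s''|
        ≤ ∑ s'' : S, ∑ s : S,
            (|stateDist p π s0 t s - stateDist Mhat π s0 t s| * p s (π t s) s''
              + stateDist Mhat π s0 t s * |p s (π t s) s'' - Mhat s (π t s) s''|) :=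
          Finset.sum_le_sum fun s'' _ => hkey s''
      _ = (∑ s : S, |stateDist p π s0 t s - stateDist Mhat π s0 t s| * ∑ s'' : S, p s (π t s) s'')
          + ∑ s : S, stateDist Mhat π s0 t s * ∑ s'' : S, |p s (π t s) s'' - Mhat s (π t s) s''| := by
          rw [Finset.sum_comm]
          simp only [Finset.sum_add_distrib, Finset.mul_sum]
      _ ≤ 2 * t * εm + ∑ s : S, stateDist Mhat π s0 t s * (2 * εm) := by
          gcongr with s hs
          · simp only [hp_sum, mul_one]; exact ih
          · exact stateDist_nonneg Mhat hM_nonneg π s0 t s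
          · have := hTV s (π t s); linarith
      _ = 2 * (((t+1 : ℕ)) : ℝ) * εm := by
          rw [← Finset.sum_mul, stateDist_sum Mhat hM_sum, one_mul]; push_cast; ring

lemma lookahead_err (H : ℕ) (π : ℕ → S → A) (s : S) :
    |lookahead p r γ (fun _ => 0) H π s - lookahead Mhat r γ (fun _ => 0) H π s| ≤
      Rmax * ∑ t ∈ Finset.range H, γ ^ t * (t : ℝ) * εm := by
  have hRmax : 0 ≤ Rmax := le_trans (hr0 s (π 0 s)) (hrmax s (π 0 s))
  have h1 : lookahead p r γ (fun _ => 0) H π s - lookahead Mhat r γ (fun _ => 0) H π s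
      = ∑ t ∈ Finset.range H, γ ^ t *
          ∑ s' : S, (stateDist p π s t s' - stateDist Mhat π s t s') * r s' (π t s') := by
    simp only [lookahead, mul_zero, Finset.sum_const_zero, add_zero, ← Finset.sum_sub_distrib,
      ← mul_sub]
    refine Finset.sum_congr rfl fun t _ => ?_
    congr 1
    exact Finset.sum_congr rfl fun s' _ => by ring
  rw [h1]
  refine (Finset.abs_sum_le_sum_abs _ _).trans ?_
  rw [Finset.mul_sum]
  refine Finset.sum_le_sum fun t _ => ?_
  rw [abs_mul, abs_of_nonneg (pow_nonneg hγ0.le t)]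
  have hcenter : ∑ s' : S, (stateDist p π s t s' - stateDist Mhat π s t s') * r s' (π t s')
      = ∑ s' : S, (stateDist p π s t s' - stateDist Mhat π s t s') * (r s' (π t s') - Rmax/2) := by
    have : ∑ s' : S, (stateDist p π s t s' - stateDist Mhat π s t s') * (Rmax/2) = 0 := by
      rw [← Finset.sum_mul, Finset.sum_sub_distrib, stateDist_sum p hp_sum,
        stateDist_sum Mhat hM_sum]
      ring
    calc ∑ s' : S, (stateDist p π s t s' - stateDist Mhat π s t s') * r s' (π t s')
        = (∑ s' : S, (stateDist p π s t s' - stateDist Mhat π s t s') * (r s' (π t s') - Rmax/2))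
            + ∑ s' : S, (stateDist p π s t s' - stateDist Mhat π s t s') * (Rmax/2) := by
          rw [← Finset.sum_add_distrib]
          exact Finset.sum_congr rfl fun s' _ => by ring
      _ = ∑ s' : S, (stateDist p π s t s' - stateDist Mhat π s t s') * (r s' (π t s') - Rmax/2) := by
          rw [this, add_zero]
  have hbound : |∑ s' : S, (stateDist p π s t s' - stateDist Mhat π s t s') * r s' (π t s')|
      ≤ (Rmax/2) * (2 * t * εm) := by
    rw [hcenter]
    refine (Finset.abs_sum_le_sum_abs _ _).trans ?_
    calc ∑ s' : S, |(stateDist p π s t s' - stateDist Mhat π s t s') * (r s' (π t s') - Rmax/2)|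
        ≤ ∑ s' : S, |stateDist p π s t s' - stateDist Mhat π s t s'| * (Rmax/2) := by
          refine Finset.sum_le_sum fun s' _ => ?_
          rw [abs_mul]
          gcongr
          exact abs_le.mpr ⟨by have := hr0 s' (π t s'); linarith, by have := hrmax s' (π t s'); linarith⟩
      _ = (Rmax/2) * ∑ s' : S, |stateDist p π s t s' - stateDist Mhat π s t s'| := by
          rw [← Finset.sum_mul]; ring
      _ ≤ (Rmax/2) * (2 * t * εm) :=
          mul_le_mul_of_nonneg_left
            (dist_TV hp_nonneg hp_sum hM_nonneg hM_sum hγ0 hγ1 hTV hr0 hrmax π s t)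
            (by linarith)
  calc γ ^ t * |∑ s' : S, (stateDist p π s t s' - stateDist Mhat π s t s') * r s' (π t s')|
      ≤ γ ^ t * ((Rmax/2) * (2 * t * εm)) := by
        gcongr
      _ = γ ^ t * (t : ℝ) * εm * Rmax := by ring
      _ = Rmax * (γ ^ t * (t : ℝ) * εm) := by ring

end

end AuxLemmas

/-- Performance bound for the fixed-horizon planning policy (H-step lookahead with zero
terminal value function) under an approximate model. -/
theorem fixed_horizon_policy_bound
    {S A : Type*} [Fintype S] [DecidableEq S] [Nonempty S] [Fintype A] [Nonempty A]
    (p Mhat : S → A → S → ℝ) (r : S → A → ℝ) (γ Rmax εm : ℝ) (H : ℕ)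
    (hp_nonneg : ∀ s a s', 0 ≤ p s a s')
    (hp_sum : ∀ s a, ∑ s' : S, p s a s' = 1)
    (hM_nonneg : ∀ s a s', 0 ≤ Mhat s a s')
    (hM_sum : ∀ s a, ∑ s' : S, Mhat s a s' = 1)
    (hγ0 : 0 < γ) (hγ1 : γ < 1) (hH : 1 ≤ H)
    (hTV : ∀ s a, (1 / 2) * ∑ s' : S, |p s a s' - Mhat s a s'| ≤ εm)
    (hr0 : ∀ s a, 0 ≤ r s a) (hrmax : ∀ s a, r s a ≤ Rmax)
    -- `W` is the (bounded) value of the H-step lookahead policy with zero terminal value: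
    -- for every state `s`, `σ s` maximizes the lookahead objective (with `Vhat ≡ 0`) under
    -- `Mhat`, and `W` satisfies the corresponding fixed-point equation under the true model.
    (W : S → ℝ) (hWbdd : ∃ B, ∀ s, |W s| ≤ B)
    (σ : S → ℕ → S → A)
    (hσmax : ∀ s (π : ℕ → S → A),
      lookahead Mhat r γ (fun _ => 0) H π s ≤ lookahead Mhat r γ (fun _ => 0) H (σ s) s)
    (hW : ∀ s, W s =
      (∑ t ∈ Finset.range H, γ ^ t * ∑ s' : S, stateDist p (σ s) s t s' * r s' (σ s t s')) +
        γ ^ H * ∑ s' : S, stateDist p (σ s) s H s' * W s')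
    (s0 : S) :
    vStar p r γ s0 - W s0 ≤
      (2 / (1 - γ ^ H)) *
        (Rmax * (∑ t ∈ Finset.range H, γ ^ t * (t : ℝ) * εm) +
          γ ^ H * ⨆ s : S, vStar p r γ s) := by
  classical
  set E := Rmax * ∑ t ∈ Finset.range H, γ ^ t * (t : ℝ) * εm with hE
  set Vmax := ⨆ s : S, vStar p r γ s with hVmaxdef
  have hbddS : BddAbove (Set.range fun s : S => vStar p r γ s) :=
    Set.Finite.bddAbove (Set.finite_range _)
  have hVle : ∀ s' : S, vStar p r γ s' ≤ Vmax := fun s' => le_ciSup hbddS s'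
  have hV0 : ∀ s' : S, 0 ≤ vStar p r γ s' := fun s' =>
    vStar_nonneg hp_nonneg hp_sum hγ0 hγ1 hr0 hrmax s'
  have hVmax0 : 0 ≤ Vmax := (hV0 s0).trans (hVle s0)
  have hlookp : ∀ (π : ℕ → S → A) (s : S), lookahead p r γ (fun _ => 0) H π s =
      ∑ t ∈ Finset.range H, γ ^ t * ∑ s' : S, stateDist p π s t s' * r s' (π t s') := by
    intro π s; simp [lookahead]
  -- Step 1: value is at most true-model lookahead plus discounted optimal tail.
  have hstep1 : ∀ (π : ℕ → S → A) (s : S),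
      value p r γ π s ≤ lookahead p r γ (fun _ => 0) H π s + γ ^ H * Vmax := by
    intro π s
    rw [value_split hp_nonneg hp_sum hγ0 hγ1 hr0 hrmax π s H, hlookp]
    have h2 : ∑ s' : S, stateDist p π s H s' * value p r γ (fun t => π (H + t)) s'
        ≤ ∑ s' : S, stateDist p π s H s' * Vmax := by
      refine Finset.sum_le_sum fun s' _ => ?_
      refine mul_le_mul_of_nonneg_left ?_ (stateDist_nonneg p hp_nonneg π s H s')
      refine le_trans ?_ (hVle s')
      exact le_ciSup (value_bddAbove hp_nonneg hp_sum hγ0 hγ1 hr0 hrmax s') _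
    have h3 : ∑ s' : S, stateDist p π s H s' * Vmax = Vmax := by
      rw [← Finset.sum_mul, stateDist_sum p hp_sum, one_mul]
    have h4 := mul_le_mul_of_nonneg_left (h2.trans_eq h3) (pow_nonneg hγ0.le H)
    linarith
  -- Step 2: any true-model lookahead is within 2E of the chosen policy's.
  have hstep2 : ∀ (s : S) (π : ℕ → S → A), lookahead p r γ (fun _ => 0) H π s ≤
      lookahead p r γ (fun _ => 0) H (σ s) s + 2 * E := by
    intro s π
    have e1 := abs_le.mp
      (lookahead_err hp_nonneg hp_sum hM_nonneg hM_sum hγ0 hγ1 hTV hr0 hrmax H π s)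
    have e2 := abs_le.mp
      (lookahead_err hp_nonneg hp_sum hM_nonneg hM_sum hγ0 hγ1 hTV hr0 hrmax H (σ s) s)
    have e3 := hσmax s π
    have := e1.2
    have := e2.1
    rw [← hE] at e1 e2
    linarith [e1.1, e1.2, e2.1, e2.2]
  -- Step 3: relate W and the true-model lookahead of σ.
  have hstep3 : ∀ s : S, lookahead p r γ (fun _ => 0) H (σ s) s =
      W s - γ ^ H * ∑ s' : S, stateDist p (σ s) s H s' * W s' := by
    intro s
    rw [hlookp]
    have := hW s
    linarith
  -- combine into per-state bound
  have hkey : ∀ s : S, vStar p r γ s ≤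
      W s - γ ^ H * ∑ s' : S, stateDist p (σ s) s H s' * W s' + 2 * E + γ ^ H * Vmax := by
    intro s
    rw [vStar]
    refine ciSup_le fun π => ?_
    have h1 := hstep1 π s
    have h2 := hstep2 s π
    have h3 := hstep3 s
    linarith
  obtain ⟨s1, hs1⟩ := Finite.exists_max fun s : S => vStar p r γ s - W s
  have hdsum : ∑ s' : S, stateDist p (σ s1) s1 H s' = 1 := stateDist_sum p hp_sum (σ s1) s1 H
  set x := vStar p r γ s1 - W s1 with hx
  have hbig : ∑ s' : S, stateDist p (σ s1) s1 H s' * (Vmax - W s') ≤ Vmax + x := by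
    calc ∑ s' : S, stateDist p (σ s1) s1 H s' * (Vmax - W s')
        ≤ ∑ s' : S, stateDist p (σ s1) s1 H s' * (Vmax + x) := by
          refine Finset.sum_le_sum fun s' _ => ?_
          refine mul_le_mul_of_nonneg_left ?_ (stateDist_nonneg p hp_nonneg (σ s1) s1 H s')
          have hv := hV0 s'
          have hm := hs1 s'
          linarith
      _ = Vmax + x := by rw [← Finset.sum_mul, hdsum, one_mul]
  have hexp : γ ^ H * ∑ s' : S, stateDist p (σ s1) s1 H s' * (Vmax - W s')
      = γ ^ H * Vmax - γ ^ H * ∑ s' : S, stateDist p (σ s1) s1 H s' * W s' := by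
    have h5 : ∑ s' : S, stateDist p (σ s1) s1 H s' * (Vmax - W s')
        = (∑ s' : S, stateDist p (σ s1) s1 H s' * Vmax)
          - ∑ s' : S, stateDist p (σ s1) s1 H s' * W s' := by
      rw [← Finset.sum_sub_distrib]
      exact Finset.sum_congr rfl fun s' _ => by ring
    rw [h5, ← Finset.sum_mul, hdsum, one_mul, mul_sub]
  have hineq : x ≤ 2 * E + γ ^ H * Vmax + γ ^ H * x := by
    have h1 := hkey s1
    have h2 := mul_le_mul_of_nonneg_left hbig (pow_nonneg hγ0.le H)
    have h3 : γ ^ H * (Vmax + x) = γ ^ H * Vmax + γ ^ H * x := by ring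
    rw [h3] at h2
    rw [hexp] at h2
    linarith [hx, h1]
  have hγH1 : γ ^ H < 1 := pow_lt_one₀ hγ0.le hγ1 (by omega)
  have hfrac : 0 < 1 - γ ^ H := by linarith
  have hγHV : 0 ≤ γ ^ H * Vmax := mul_nonneg (pow_nonneg hγ0.le H) hVmax0
  have hT : (2 / (1 - γ ^ H)) * (E + γ ^ H * Vmax) * (1 - γ ^ H)
      = 2 * E + 2 * (γ ^ H * Vmax) := by
    field_simp
  have hxle : x ≤ (2 / (1 - γ ^ H)) * (E + γ ^ H * Vmax) := by
    rw [← mul_le_mul_iff_of_pos_right hfrac, hT]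
    nlinarith [hineq, hγHV]
  have hfin := hs1 s0
  -- note `hfin : vStar p r γ s0 - W s0 ≤ x` up to beta
  calc vStar p r γ s0 - W s0 ≤ x := hfin
    _ ≤ (2 / (1 - γ ^ H)) * (E + γ ^ H * Vmax) := hxle
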